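/- Let ρ ∈ (0,∞). For every x ∈ (0,∞), the pair (f_ρ(x,·), g_ρ(x,·)) : ℝ → (0,∞)² is a default ρ-Brownian Boost ODE pair; conversely, every default ρ-Brownian Boost ODE pair (f,g) equals (f_ρ(x,·), g_ρ(x,·)) for the value x = g(0) ∈ (0,∞). Moreover, g_ρ(x,·) = f_ρ(x,·) · S_ρ(x,·) for every x ∈ (0,∞). -/

import Mathlib

open Real MeasureTheory Filter Set

noncomputable section

/-- `S` is the (unique) solution of the ODE
`S'(u) = -8ρ S(u)^{1+ρ}/(1+S(u)^ρ)²` with `S(0) = x`, valued in `(0,∞)`. -/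
def IsSsol (ρ x : ℝ) (S : ℝ → ℝ) : Prop :=
  (∀ u : ℝ, 0 < S u) ∧ S 0 = x ∧
    ∀ u : ℝ, HasDerivAt S (-(8 * ρ * S u ^ (1 + ρ)) / (1 + S u ^ ρ) ^ 2) u

/-- `f_ρ(x,·)`, expressed in terms of the solution `S = S_ρ(x,·)`. -/
def fRho (ρ : ℝ) (S : ℝ → ℝ) (r : ℝ) : ℝ :=
  Real.exp (2 * ∫ u in (0:ℝ)..r, (1 - 2 * (1 + (1 - ρ) * S u ^ ρ) / (1 + S u ^ ρ) ^ 2))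

/-- `g_ρ(x,·)`, expressed in terms of the solution `S = S_ρ(x,·)`. -/
def gRho (ρ x : ℝ) (S : ℝ → ℝ) (r : ℝ) : ℝ :=
  x * Real.exp (-2 * ∫ u in (0:ℝ)..r,
      (1 - 2 * ((1 - ρ) * S u ^ ρ + S u ^ (2 * ρ)) / (1 + S u ^ ρ) ^ 2))

/-- `(f,g)` is a `ρ`-Brownian Boost ODE pair. -/
def IsBBpair (ρ : ℝ) (f g : ℝ → ℝ) : Prop :=
  Differentiable ℝ f ∧ Differentiable ℝ g ∧ (∀ u : ℝ, 0 < f u) ∧ (∀ u : ℝ, 0 < g u) ∧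
    ∀ u : ℝ,
      2 * ρ * f u ^ (1 + ρ) * g u ^ ρ
          = (f u ^ (2 * ρ) - g u ^ (2 * ρ)) * f u
            + (1 / 2) * deriv f u * (f u ^ ρ + g u ^ ρ) ^ 2 ∧
      2 * ρ * f u ^ ρ * g u ^ (1 + ρ)
          = -((f u ^ (2 * ρ) - g u ^ (2 * ρ)) * g u)
            - (1 / 2) * deriv g u * (f u ^ ρ + g u ^ ρ) ^ 2

namespace BB

def A (ρ s : ℝ) : ℝ := 1 - 2 * (1 + (1 - ρ) * s ^ ρ) / (1 + s ^ ρ) ^ 2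
def B (ρ s : ℝ) : ℝ := 1 - 2 * ((1 - ρ) * s ^ ρ + s ^ (2 * ρ)) / (1 + s ^ ρ) ^ 2
def Phi (ρ y : ℝ) : ℝ := -(8 * ρ * Real.exp (ρ * y)) / (1 + Real.exp (ρ * y)) ^ 2

lemma rpow2 {s : ℝ} (hs : 0 < s) (ρ : ℝ) : s ^ (2*ρ) = (s^ρ)^2 := by
  rw [mul_comm, Real.rpow_mul hs.le]; norm_num [Real.rpow_natCast]

lemma one_add_pos {s ρ : ℝ} (hs : 0 < s) : 0 < 1 + s ^ ρ := by positivity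

lemma A_eq {s : ℝ} (hs : 0 < s) (ρ : ℝ) :
    A ρ s = ((s^ρ)^2 - 1 + 2*ρ*s^ρ) / (1 + s^ρ)^2 := by
  have h := (one_add_pos (ρ := ρ) hs).ne'
  unfold A; field_simp; ring

lemma B_eq {s : ℝ} (hs : 0 < s) (ρ : ℝ) :
    B ρ s = (1 - (s^ρ)^2 + 2*ρ*s^ρ) / (1 + s^ρ)^2 := by
  have h := (one_add_pos (ρ := ρ) hs).ne'
  unfold B; rw [rpow2 hs]; field_simp; ring

lemma A_add_B {s : ℝ} (hs : 0 < s) (ρ : ℝ) :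
    A ρ s + B ρ s = 4*ρ*s^ρ / (1+s^ρ)^2 := by
  have h := (one_add_pos (ρ := ρ) hs).ne'
  rw [A_eq hs, B_eq hs]; field_simp; ring

lemma Phi_log {s : ℝ} (hs : 0 < s) (ρ : ℝ) :
    Phi ρ (Real.log s) = -(8 * ρ * s ^ ρ) / (1 + s ^ ρ) ^ 2 := by
  unfold Phi; rw [mul_comm ρ, ← Real.rpow_def_of_pos hs]

/-! ### Lipschitz bound on the vector field `Phi` -/

lemma hasDerivAt_Phi (ρ y : ℝ) :
    HasDerivAt (Phi ρ) (8*ρ^2*Real.exp (ρ*y)*(Real.exp (ρ*y)-1)/(1+Real.exp (ρ*y))^3) y := by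
  have he : 0 < Real.exp (ρ*y) := Real.exp_pos _
  have hq : HasDerivAt (fun y => Real.exp (ρ*y)) (Real.exp (ρ*y) * ρ) y := by
    simpa using ((hasDerivAt_id y).const_mul ρ).exp
  have hN : HasDerivAt (fun y => -(8 * ρ * Real.exp (ρ * y)))
      (-(8 * ρ * (Real.exp (ρ*y) * ρ))) y := ((hq.const_mul (8*ρ)).neg)
  have hD : HasDerivAt (fun y => (1 + Real.exp (ρ * y)) ^ 2)
      (2 * (1 + Real.exp (ρ*y)) ^ 1 * (Real.exp (ρ*y) * ρ)) y :=
    ((hq.const_add 1).pow 2)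
  have h1e : (1 + Real.exp (ρ*y)) ≠ 0 := by positivity
  have := hN.div hD (pow_ne_zero 2 h1e)
  refine this.congr_deriv ?_
  field_simp
  ring

lemma abs_deriv_Phi_le (ρ y : ℝ) :
    |8*ρ^2*Real.exp (ρ*y)*(Real.exp (ρ*y)-1)/(1+Real.exp (ρ*y))^3| ≤ 2*ρ^2 := by
  set e := Real.exp (ρ*y) with hedef
  have he : 0 < e := Real.exp_pos _
  have h3 : 0 < (1+e)^3 := by positivity
  rw [abs_div, abs_of_pos h3, div_le_iff₀ h3, abs_le]
  constructor
  · rw [neg_le]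
    nlinarith [mul_nonneg (sq_nonneg ρ) (sq_nonneg (e - 1/14)),
      mul_nonneg (sq_nonneg ρ) (mul_pos (mul_pos he he) he).le, sq_nonneg ρ,
      mul_nonneg (sq_nonneg ρ) he.le]
  · nlinarith [mul_nonneg (mul_nonneg (sq_nonneg ρ) he.le) (sq_nonneg (e - 1/2)),
      mul_nonneg (sq_nonneg ρ) he.le, sq_nonneg ρ]

lemma lipschitz_Phi (ρ : ℝ) : LipschitzWith ⟨2*ρ^2, by positivity⟩ (Phi ρ) := by
  apply lipschitzWith_of_nnnorm_deriv_le
    (fun y => (hasDerivAt_Phi ρ y).differentiableAt)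
  intro y
  rw [(hasDerivAt_Phi ρ y).deriv]
  refine NNReal.coe_le_coe.mp ?_
  rw [coe_nnnorm, Real.norm_eq_abs]
  exact abs_deriv_Phi_le ρ y

/-! ### Derivatives of `fRho`, `gRho` -/

variable {ρ x : ℝ} {S : ℝ → ℝ}

lemma fRho_eq (ρ : ℝ) (S : ℝ → ℝ) (r : ℝ) :
    fRho ρ S r = Real.exp (2 * ∫ u in (0:ℝ)..r, A ρ (S u)) := rfl

lemma gRho_eq (ρ x : ℝ) (S : ℝ → ℝ) (r : ℝ) :
    gRho ρ x S r = x * Real.exp (-2 * ∫ u in (0:ℝ)..r, B ρ (S u)) := rfl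

lemma diffS (hS : IsSsol ρ x S) : Differentiable ℝ S :=
  fun u => (hS.2.2 u).differentiableAt

lemma contS (hS : IsSsol ρ x S) : Continuous S := (diffS hS).continuous

lemma contP (hS : IsSsol ρ x S) (c : ℝ) : Continuous fun u => S u ^ c :=
  (contS hS).rpow_const (fun u => Or.inl (hS.1 u).ne')

lemma contDen (hS : IsSsol ρ x S) : ∀ u, ((1 + S u ^ ρ) ^ 2 : ℝ) ≠ 0 :=
  fun u => pow_ne_zero _ (one_add_pos (hS.1 u)).ne'

lemma contA (hS : IsSsol ρ x S) : Continuous fun u => A ρ (S u) := by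
  unfold A
  exact continuous_const.sub ((continuous_const.mul
    (continuous_const.add (continuous_const.mul (contP hS ρ)))).div
    ((continuous_const.add (contP hS ρ)).pow 2) (contDen hS))

lemma contB (hS : IsSsol ρ x S) : Continuous fun u => B ρ (S u) := by
  unfold B
  exact continuous_const.sub ((continuous_const.mul
    ((continuous_const.mul (contP hS ρ)).add (contP hS (2*ρ)))).div
    ((continuous_const.add (contP hS ρ)).pow 2) (contDen hS))

lemma hasDerivAt_integral {F : ℝ → ℝ} (hF : Continuous F) (r : ℝ) :
    HasDerivAt (fun r => ∫ u in (0:ℝ)..r, F u) (F r) r :=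
  intervalIntegral.integral_hasDerivAt_right (hF.intervalIntegrable 0 r)
    (hF.stronglyMeasurableAtFilter _ _) hF.continuousAt

lemma hasDerivAt_fRho (hS : IsSsol ρ x S) (r : ℝ) :
    HasDerivAt (fRho ρ S) (2 * A ρ (S r) * fRho ρ S r) r := by
  have h := (((hasDerivAt_integral (contA hS) r).const_mul 2).exp)
  simp only [← fRho_eq] at h
  convert h using 1; ring

lemma hasDerivAt_gRho (hS : IsSsol ρ x S) (r : ℝ) :
    HasDerivAt (gRho ρ x S) (-2 * B ρ (S r) * gRho ρ x S r) r := by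
  have h := ((((hasDerivAt_integral (contB hS) r).const_mul (-2)).exp).const_mul x)
  simp only [← gRho_eq] at h
  refine h.congr_deriv ?_
  rw [gRho_eq]; ring

lemma SdivS (hS : IsSsol ρ x S) (r : ℝ) :
    -(8 * ρ * S r ^ (1 + ρ)) / (1 + S r ^ ρ) ^ 2 / S r
      = -(8 * ρ * S r ^ ρ) / (1 + S r ^ ρ) ^ 2 := by
  have hs := hS.1 r
  rw [Real.rpow_add hs, Real.rpow_one]
  field_simp

lemma gRho_eq_fRho_mul_S (hx : 0 < x) (hS : IsSsol ρ x S) (r : ℝ) :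
    gRho ρ x S r = fRho ρ S r * S r := by
  set IA : ℝ → ℝ := fun r => ∫ u in (0:ℝ)..r, A ρ (S u) with hIA
  set IB : ℝ → ℝ := fun r => ∫ u in (0:ℝ)..r, B ρ (S u) with hIB
  set D : ℝ → ℝ := fun r => (-2 * IB r + Real.log x) - (2 * IA r + Real.log (S r)) with hD
  have hder : ∀ r, HasDerivAt D 0 r := by
    intro r
    have hs := hS.1 r
    have h1 : HasDerivAt (fun r => -2 * IB r + Real.log x)
        (-2 * B ρ (S r)) r :=
      ((hasDerivAt_integral (contB hS) r).const_mul (-2)).add_const _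
    have h2 : HasDerivAt (fun r => 2 * IA r + Real.log (S r))
        (2 * A ρ (S r) + -(8 * ρ * S r ^ (1+ρ)) / (1 + S r ^ ρ) ^ 2 / S r) r :=
      ((hasDerivAt_integral (contA hS) r).const_mul 2).add ((hS.2.2 r).log hs.ne')
    have := h1.sub h2
    refine this.congr_deriv ?_
    rw [SdivS hS r]
    have hAB := A_add_B (ρ := ρ) hs
    have h1p := (one_add_pos (ρ := ρ) hs).ne'
    have : A ρ (S r) = 4*ρ*S r^ρ / (1+S r^ρ)^2 - B ρ (S r) := by linarith
    rw [this]
    field_simp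
    ring
  have hconst := is_const_of_deriv_eq_zero
    (fun r => (hder r).differentiableAt) (fun r => (hder r).deriv) r 0
  have hD0 : D 0 = 0 := by
    simp only [hD, hIA, hIB, intervalIntegral.integral_same, hS.2.1]
    ring
  have hDr : D r = 0 := by rw [hconst, hD0]
  have key : -2 * IB r + Real.log x = 2 * IA r + Real.log (S r) := by
    have := hDr; simp only [hD] at this; linarith
  rw [gRho_eq, fRho_eq]
  rw [show x * Real.exp (-2 * IB r) = Real.exp (Real.log x + -2 * IB r) by
    rw [Real.exp_add, Real.exp_log hx]]
  rw [show Real.log x + -2 * IB r = 2 * IA r + Real.log (S r) by linarith]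
  rw [Real.exp_add, Real.exp_log (hS.1 r)]

lemma bb_forward (hx : 0 < x) (hS : IsSsol ρ x S) (u : ℝ) :
      2 * ρ * fRho ρ S u ^ (1 + ρ) * gRho ρ x S u ^ ρ
          = (fRho ρ S u ^ (2 * ρ) - gRho ρ x S u ^ (2 * ρ)) * fRho ρ S u
            + (1 / 2) * deriv (fRho ρ S) u * (fRho ρ S u ^ ρ + gRho ρ x S u ^ ρ) ^ 2 ∧
      2 * ρ * fRho ρ S u ^ ρ * gRho ρ x S u ^ (1 + ρ)
          = -((fRho ρ S u ^ (2 * ρ) - gRho ρ x S u ^ (2 * ρ)) * gRho ρ x S u)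
            - (1 / 2) * deriv (gRho ρ x S) u * (fRho ρ S u ^ ρ + gRho ρ x S u ^ ρ) ^ 2 := by
  have hfv : 0 < fRho ρ S u := Real.exp_pos _
  have hs : 0 < S u := hS.1 u
  have hdf : deriv (fRho ρ S) u = 2 * A ρ (S u) * fRho ρ S u := (hasDerivAt_fRho hS u).deriv
  have hdg : deriv (gRho ρ x S) u = -2 * B ρ (S u) * gRho ρ x S u := (hasDerivAt_gRho hS u).deriv
  have hgv : gRho ρ x S u = fRho ρ S u * S u := gRho_eq_fRho_mul_S hx hS u
  rw [hdf, hdg, hgv]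
  set fv := fRho ρ S u with hfvdef
  set s := S u with hsdef
  have e1 : fv ^ (1+ρ) = fv * fv ^ ρ := by rw [Real.rpow_add hfv, Real.rpow_one]
  have e2 : (fv*s) ^ ρ = fv^ρ * s^ρ := Real.mul_rpow hfv.le hs.le
  have e3 : fv ^ (2*ρ) = (fv^ρ)^2 := rpow2 hfv ρ
  have e4 : (fv*s) ^ (2*ρ) = (fv^ρ)^2 * (s^ρ)^2 := by
    rw [rpow2 (mul_pos hfv hs), e2]; ring
  have e5 : (fv*s) ^ (1+ρ) = (fv*s) * (fv^ρ * s^ρ) := by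
    rw [Real.rpow_add (mul_pos hfv hs), Real.rpow_one, e2]
  have hF : 0 < fv ^ ρ := Real.rpow_pos_of_pos hfv ρ
  have hp : 0 < s ^ ρ := Real.rpow_pos_of_pos hs ρ
  have h1p := (one_add_pos (ρ := ρ) hs).ne'
  rw [e1, e2, e3, e4, e5, A_eq hs, B_eq hs]
  constructor
  · field_simp
    ring
  · field_simp
    ring

/-! ### Converse: extracting the derivatives from the BB equations -/

variable {f g : ℝ → ℝ}

lemma deriv_f_eq (hBB : IsBBpair ρ f g) (u : ℝ) :
    deriv f u = 2 * A ρ (g u / f u) * f u := by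
  obtain ⟨hdf, hdg, hfpos, hgpos, heqs⟩ := hBB
  have hf := hfpos u; have hg := hgpos u
  have hQ : ((f u ^ ρ + g u ^ ρ)^2 : ℝ) ≠ 0 := by positivity
  have h1 := (heqs u).1
  have e1 : f u ^ (1+ρ) = f u * f u ^ ρ := by rw [Real.rpow_add hf, Real.rpow_one]
  have e3 : f u ^ (2*ρ) = (f u^ρ)^2 := rpow2 hf ρ
  have e3g : g u ^ (2*ρ) = (g u^ρ)^2 := rpow2 hg ρ
  have ediv : (g u / f u) ^ ρ = g u ^ ρ / f u ^ ρ := Real.div_rpow hg.le hf.le ρ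
  have hF : (f u ^ ρ : ℝ) ≠ 0 := (Real.rpow_pos_of_pos hf ρ).ne'
  have key : deriv f u * (f u ^ ρ + g u ^ ρ)^2
      = 2 * A ρ (g u / f u) * f u * (f u ^ ρ + g u ^ ρ)^2 := by
    have lhs : deriv f u * (f u ^ ρ + g u ^ ρ)^2
        = 2*(2*ρ*(f u * f u ^ ρ)*(g u ^ ρ) - ((f u^ρ)^2-(g u^ρ)^2)*(f u)) := by
      rw [e1, e3, e3g] at h1; linarith
    rw [lhs, A_eq (div_pos hg hf), ediv]
    have h1p : (1 : ℝ) + g u ^ ρ / f u ^ ρ ≠ 0 :=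
      (by positivity : (0:ℝ) < 1 + g u ^ ρ / f u ^ ρ).ne'
    field_simp
    ring
  exact mul_right_cancel₀ hQ key

lemma deriv_g_eq (hBB : IsBBpair ρ f g) (u : ℝ) :
    deriv g u = -2 * B ρ (g u / f u) * g u := by
  obtain ⟨hdf, hdg, hfpos, hgpos, heqs⟩ := hBB
  have hf := hfpos u; have hg := hgpos u
  have hQ : ((f u ^ ρ + g u ^ ρ)^2 : ℝ) ≠ 0 := by positivity
  have h2 := (heqs u).2
  have e1 : g u ^ (1+ρ) = g u * g u ^ ρ := by rw [Real.rpow_add hg, Real.rpow_one]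
  have e3 : f u ^ (2*ρ) = (f u^ρ)^2 := rpow2 hf ρ
  have e3g : g u ^ (2*ρ) = (g u^ρ)^2 := rpow2 hg ρ
  have ediv : (g u / f u) ^ ρ = g u ^ ρ / f u ^ ρ := Real.div_rpow hg.le hf.le ρ
  have hF : (f u ^ ρ : ℝ) ≠ 0 := (Real.rpow_pos_of_pos hf ρ).ne'
  have key : deriv g u * (f u ^ ρ + g u ^ ρ)^2
      = -2 * B ρ (g u / f u) * g u * (f u ^ ρ + g u ^ ρ)^2 := by
    have lhs : deriv g u * (f u ^ ρ + g u ^ ρ)^2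
        = 2*(-((f u^ρ)^2-(g u^ρ)^2)*(g u) - 2*ρ*(f u ^ ρ)*(g u * g u ^ ρ)) := by
      rw [e1, e3, e3g] at h2; linarith
    rw [lhs, B_eq (div_pos hg hf), ediv]
    have h1p : (1 : ℝ) + g u ^ ρ / f u ^ ρ ≠ 0 :=
      (by positivity : (0:ℝ) < 1 + g u ^ ρ / f u ^ ρ).ne'
    field_simp
    ring
  exact mul_right_cancel₀ hQ key

/-- Uniqueness: `S` coincides with `g/f`. -/
lemma S_eq_div (hBB : IsBBpair ρ f g) (hf0 : f 0 = 1)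
    (hS : IsSsol ρ (g 0) S) (u : ℝ) : S u = g u / f u := by
  obtain ⟨hdf, hdg, hfpos, hgpos, heqs⟩ := hBB
  set L1 : ℝ → ℝ := fun u => Real.log (S u) with hL1def
  set L2 : ℝ → ℝ := fun u => Real.log (g u) - Real.log (f u) with hL2def
  have hL1 : ∀ t, HasDerivAt L1 (Phi ρ (L1 t)) t := by
    intro t
    have h := (hS.2.2 t).log (hS.1 t).ne'
    rw [SdivS hS t, ← Phi_log (hS.1 t) ρ] at h
    exact h
  have hL2 : ∀ t, HasDerivAt L2 (Phi ρ (L2 t)) t := by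
    intro t
    have hft := hfpos t; have hgt := hgpos t
    have hht : 0 < g t / f t := div_pos hgt hft
    have h : HasDerivAt L2 (deriv g t / g t - deriv f t / f t) t :=
      (((hdg t).hasDerivAt).log hgt.ne').sub (((hdf t).hasDerivAt).log hft.ne')
    have heq : deriv g t / g t - deriv f t / f t = Phi ρ (L2 t) := by
      rw [deriv_f_eq ⟨hdf, hdg, hfpos, hgpos, heqs⟩ t,
        deriv_g_eq ⟨hdf, hdg, hfpos, hgpos, heqs⟩ t]
      have hl2 : L2 t = Real.log (g t / f t) := (Real.log_div hgt.ne' hft.ne').symm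
      rw [hl2, Phi_log hht ρ]
      have hAB := A_add_B (ρ := ρ) hht
      have h1p := (one_add_pos (ρ := ρ) hht).ne'
      have hA : A ρ (g t / f t) = 4*ρ*(g t / f t)^ρ / (1+(g t / f t)^ρ)^2
          - B ρ (g t / f t) := by linarith
      rw [hA]
      field_simp
      ring
    rw [heq] at h
    exact h
  have heq0 : L1 0 = L2 0 := by
    simp only [hL1def, hL2def, hS.2.1, hf0, Real.log_one, sub_zero]
  have key : L1 u = L2 u := by
    have hv : ∀ t : ℝ, LipschitzOnWith ⟨2*ρ^2, by positivity⟩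
        ((fun (_ : ℝ) (y : ℝ) => Phi ρ y) t) ((fun (_ : ℝ) => (univ : Set ℝ)) t) :=
      fun _ => (lipschitz_Phi ρ).lipschitzOnWith
    have ht0 : (0:ℝ) ∈ Ioo (-(|u|+1)) (|u|+1) := by
      constructor <;> nlinarith [abs_nonneg u]
    have hd1 : Differentiable ℝ L1 := fun t => (hL1 t).differentiableAt
    have hd2 : Differentiable ℝ L2 := fun t => (hL2 t).differentiableAt
    have hcont1 : ContinuousOn L1 (Icc (-(|u|+1)) (|u|+1)) := hd1.continuous.continuousOn
    have hcont2 : ContinuousOn L2 (Icc (-(|u|+1)) (|u|+1)) := hd2.continuous.continuousOn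
    have := ODE_solution_unique_of_mem_Icc (fun t _ => hv t) ht0 hcont1
      (fun t _ => hL1 t) (fun t _ => mem_univ _) hcont2
      (fun t _ => hL2 t) (fun t _ => mem_univ _) heq0
    exact this ⟨by nlinarith [abs_nonneg u, neg_abs_le u], by nlinarith [le_abs_self u]⟩
  have key' : Real.log (S u) = Real.log (g u / f u) := by
    have h := key
    simp only [hL1def, hL2def] at h
    rw [h, ← Real.log_div (hgpos u).ne' (hfpos u).ne']
  calc S u = Real.exp (Real.log (S u)) := (Real.exp_log (hS.1 u)).symm
    _ = Real.exp (Real.log (g u / f u)) := by rw [key']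
    _ = g u / f u := Real.exp_log (div_pos (hgpos u) (hfpos u))

end BB

theorem stmt0 (ρ : ℝ) (hρ : 0 < ρ) :
    (∀ x : ℝ, 0 < x → ∀ S : ℝ → ℝ, IsSsol ρ x S →
      IsBBpair ρ (fRho ρ S) (gRho ρ x S) ∧ fRho ρ S 0 = 1 ∧ 0 < gRho ρ x S 0 ∧
        ∀ r : ℝ, gRho ρ x S r = fRho ρ S r * S r) ∧
    (∀ f g : ℝ → ℝ, IsBBpair ρ f g → f 0 = 1 →
      ∀ S : ℝ → ℝ, IsSsol ρ (g 0) S →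
        ∀ r : ℝ, f r = fRho ρ S r ∧ g r = gRho ρ (g 0) S r) := by
  constructor
  · intro x hx S hS
    refine ⟨⟨fun r => (BB.hasDerivAt_fRho hS r).differentiableAt,
      fun r => (BB.hasDerivAt_gRho hS r).differentiableAt,
      fun r => Real.exp_pos _, fun r => mul_pos hx (Real.exp_pos _),
      fun u => BB.bb_forward hx hS u⟩, ?_, mul_pos hx (Real.exp_pos _),
      fun r => BB.gRho_eq_fRho_mul_S hx hS r⟩
    rw [BB.fRho_eq, intervalIntegral.integral_same, mul_zero, Real.exp_zero]
  · intro f g hBB hf0 S hS r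
    have hg0 : 0 < g 0 := hBB.2.2.2.1 0
    have hfpos := hBB.2.2.1
    have hgpos := hBB.2.2.2.1
    have hSdiv := BB.S_eq_div hBB hf0 hS
    -- derivative of log f is 2 A (S t)
    have hlogf : ∀ t : ℝ, HasDerivAt (fun t => Real.log (f t)) (2 * BB.A ρ (S t)) t := by
      intro t
      have h := ((hBB.1 t).hasDerivAt).log (hfpos t).ne'
      rw [BB.deriv_f_eq hBB t, ← hSdiv t] at h
      have : 2 * BB.A ρ (S t) * f t / f t = 2 * BB.A ρ (S t) := by
        rw [mul_div_assoc, div_self (hfpos t).ne', mul_one]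
      rwa [this] at h
    have hlogg : ∀ t : ℝ, HasDerivAt (fun t => Real.log (g t)) (-2 * BB.B ρ (S t)) t := by
      intro t
      have h := ((hBB.2.1 t).hasDerivAt).log (hgpos t).ne'
      rw [BB.deriv_g_eq hBB t, ← hSdiv t] at h
      have : -2 * BB.B ρ (S t) * g t / g t = -2 * BB.B ρ (S t) := by
        rw [mul_div_assoc, div_self (hgpos t).ne', mul_one]
      rwa [this] at h
    constructor
    · have hFTC : ∫ t in (0:ℝ)..r, 2 * BB.A ρ (S t)
          = Real.log (f r) - Real.log (f 0) :=
        intervalIntegral.integral_eq_sub_of_hasDerivAt (fun t _ => hlogf t)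
          ((continuous_const.mul (BB.contA hS)).intervalIntegrable 0 r)
      rw [hf0, Real.log_one, sub_zero, intervalIntegral.integral_const_mul] at hFTC
      rw [BB.fRho_eq, hFTC, Real.exp_log (hfpos r)]
    · have hFTC : ∫ t in (0:ℝ)..r, -2 * BB.B ρ (S t)
          = Real.log (g r) - Real.log (g 0) :=
        intervalIntegral.integral_eq_sub_of_hasDerivAt (fun t _ => hlogg t)
          ((continuous_const.mul (BB.contB hS)).intervalIntegrable 0 r)
      rw [intervalIntegral.integral_const_mul] at hFTC
      rw [BB.gRho_eq, hFTC, Real.exp_sub, Real.exp_log (hgpos r), Real.exp_log hg0]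
      field_simp
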